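/- The set C_f^∞ of f-smooth words over a binary alphabet {a,b} is left- and right-extendable: for every u ∈ C_f^∞ there exist letters c, d ∈ {a,b} with cu ∈ C_f^∞ and ud ∈ C_f^∞. -/

import Mathlib

namespace SmoothWords

/-- Complement of a letter over the alphabet `{a, b}`. -/
def flip (a b c : ℕ) : ℕ := if c = a then b else a

/-- Run-length encoding of a finite word: list of (letter, exponent) pairs. -/
def runs : List ℕ → List (ℕ × ℕ)
  | [] => []
  | c :: t =>
    match runs t with
    | [] => [(c, 1)]
    | (d, k) :: r => if c = d then (c, k + 1) :: r else (c, 1) :: (d, k) :: r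

/-- The exponents of the canonical run-length factorization. -/
def exps (u : List ℕ) : List ℕ := (runs u).map Prod.snd

/-- Boundary cut used by the finite derivatives. -/
def cut (a b p : ℕ) : List ℕ := if p ≤ a then [] else [b]

/-- The finite derivative `D_f`. -/
def Df (a b : ℕ) (u : List ℕ) : List ℕ :=
  match exps u with
  | [] => []
  | [p] => cut a b p
  | p :: q :: rest =>
      cut a b p ++ (q :: rest).dropLast ++ cut a b ((q :: rest).getLast (List.cons_ne_nil _ _))

/-- `u` is f-derivable: letters in `{a,b}`, inner run exponents in `{a,b}`,
boundary run exponents in `[1, b]`. -/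
def Cf1 (a b : ℕ) (u : List ℕ) : Prop :=
  (∀ c ∈ u, c = a ∨ c = b) ∧
  (∀ p ∈ exps u, p ≤ b) ∧
  (∀ p ∈ ((exps u).drop 1).dropLast, p = a ∨ p = b)

/-- `u` is f-smooth: all iterated finite derivatives are f-derivable
(equivalently, some iterate is `ε`). -/
def FSmooth (a b : ℕ) (u : List ℕ) : Prop := ∀ n, Cf1 a b ((Df a b)^[n] u)

/-- The r-derivative `D_r`: keeps all exponents but cuts the last one. -/
def Dr (a b : ℕ) (u : List ℕ) : List ℕ :=
  match exps u with
  | [] => []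
  | p :: rest =>
      (p :: rest).dropLast ++ cut a b ((p :: rest).getLast (List.cons_ne_nil _ _))

/-- `u` is r-derivable. -/
def Cr1 (a b : ℕ) (u : List ℕ) : Prop :=
  (∀ c ∈ u, c = a ∨ c = b) ∧
  (∀ p ∈ exps u, p ≤ b) ∧
  (∀ p ∈ (exps u).dropLast, p = a ∨ p = b)

/-- `u` is r-smooth. -/
def RSmooth (a b : ℕ) (u : List ℕ) : Prop := ∀ n, Cr1 a b ((Dr a b)^[n] u)

/-- `y` is the derivative of the infinite word `x`: `x = x₀^{y₀} x̄₀^{y₁} x₀^{y₂} ⋯`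
with all `y i ∈ {a, b}` (in particular `x` is derivable). -/
def DerivesTo (a b : ℕ) (x y : ℕ → ℕ) : Prop :=
  (∀ i, y i = a ∨ y i = b) ∧
  ∃ S : ℕ → ℕ, S 0 = 0 ∧ (∀ k, S (k + 1) = S k + y k) ∧
    ∀ k i, S k ≤ i → i < S (k + 1) → x i = (flip a b)^[k] (x 0)

/-- An infinite word over `{a,b}` is smooth if it is infinitely derivable. -/
def Smooth (a b : ℕ) (x : ℕ → ℕ) : Prop :=
  (∀ i, x i = a ∨ x i = b) ∧
  ∃ X : ℕ → ℕ → ℕ, X 0 = x ∧ ∀ n, DerivesTo a b (X n) (X (n + 1))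

/-- Auxiliary for the f-primitives: alternate blocks with given exponents,
ending with a block of exponent `a`. -/
def pfAux (a b : ℕ) : ℕ → List ℕ → List ℕ
  | c, [] => List.replicate a c
  | c, p :: t => List.replicate p c ++ pfAux a b (flip a b c) t

/-- The f-primitive `P_{f,c}`. -/
def Pf (a b c : ℕ) (u : List ℕ) : List ℕ :=
  if c = a then List.replicate a a ++ pfAux a b b u
  else (List.replicate a a ++ pfAux a b b u).map (flip a b)

/-- `u` is a bispecial f-smooth word. -/
def Bispecial (a b : ℕ) (u : List ℕ) : Prop :=
  FSmooth a b u ∧ FSmooth a b (a :: u) ∧ FSmooth a b (b :: u) ∧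
    FSmooth a b (u ++ [a]) ∧ FSmooth a b (u ++ [b])

open Classical in
/-- The multiplicity `m(u) = |{aua,aub,bua,bub} ∩ C_f^∞| - 3`. -/
noncomputable def mult (a b : ℕ) (u : List ℕ) : ℤ :=
  (if FSmooth a b (a :: u ++ [a]) then 1 else 0) +
  (if FSmooth a b (a :: u ++ [b]) then 1 else 0) +
  (if FSmooth a b (b :: u ++ [a]) then 1 else 0) +
  (if FSmooth a b (b :: u ++ [b]) then 1 else 0) - 3

/-- The vertex of the tree `T` indexed by the path `s` from the root `ε`
(`false` = child by `P_{f,a}`, `true` = child by `P_{f,b}`). -/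
def node (a b : ℕ) : List Bool → List ℕ
  | [] => []
  | c :: s => Pf a b (if c then b else a) (node a b s)

/-- Total length `f(i) = ∑_{u ∈ T_i} |u|` of generation `i` of `T`. -/
def totalLen (a b i : ℕ) : ℕ :=
  ∑ s : Fin i → Bool, (node a b (List.ofFn s)).length

/-- Generation `i` of the tree `T`, as a finite set of words. -/
def genSet (a b i : ℕ) : Finset (List ℕ) :=
  (Finset.univ : Finset (Fin i → Bool)).image fun s => node a b (List.ofFn s)

/-- `b_i(n) = |T_i ∩ A^n|`. -/
def bfun (a b i n : ℕ) : ℕ := ((genSet a b i).filter fun u => u.length = n).card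

/-- `s_i(n) = ∑_{m<n} b_i(m)`. -/
def sfun (a b i n : ℕ) : ℕ := ∑ m ∈ Finset.range n, bfun a b i m

/-- `p_i(n) = ∑_{m<n} s_i(m)`. -/
def pfun (a b i n : ℕ) : ℕ := ∑ m ∈ Finset.range n, sfun a b i m

/-- `p(n) = ∑_i p_i(n)`. -/
noncomputable def pTot (a b n : ℕ) : ℝ := ∑' i : ℕ, (pfun a b i n : ℝ)

/-- `l_i`, the minimal length of a word of generation `i` of `T`. -/
noncomputable def li (a b i : ℕ) : ℕ :=
  sInf {m | ∃ s : Fin i → Bool, (node a b (List.ofFn s)).length = m}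

/-- `u` is a factor of the infinite word `x`. -/
def FactorOf (u : List ℕ) (x : ℕ → ℕ) : Prop :=
  ∃ i, u = (List.range u.length).map fun j => x (i + j)


lemma runs_cons (c : ℕ) (t : List ℕ) : runs (c :: t) =
    match runs t with
    | [] => [(c, 1)]
    | (d, k) :: r => if c = d then (c, k + 1) :: r else (c, 1) :: (d, k) :: r := rfl

lemma runs_eq_nil_iff {u : List ℕ} : runs u = [] ↔ u = [] := by
  cases u with
  | nil => simp [runs]
  | cons c t =>
    rw [runs_cons]
    constructor
    · intro h; exfalso; revert h; cases h' : runs t with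
      | nil => simp
      | cons p r => obtain ⟨d, k⟩ := p; dsimp; split <;> simp
    · intro h; exact absurd h (List.cons_ne_nil _ _)

lemma runs_cons_exists (c : ℕ) (t : List ℕ) : ∃ k r, runs (c :: t) = (c, k) :: r := by
  rw [runs_cons]
  cases h' : runs t with
  | nil => exact ⟨1, [], rfl⟩
  | cons p r =>
    obtain ⟨d, k⟩ := p; dsimp
    by_cases hcd : c = d
    · subst hcd; simp
    · simp [hcd]

lemma runs_cons_same {u : List ℕ} {c k r} (hr : runs u = (c, k) :: r) :
    runs (c :: u) = (c, k + 1) :: r := by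
  rw [runs_cons, hr]; simp

lemma runs_cons_diff {u : List ℕ} {c k r d} (hr : runs u = (c, k) :: r) (hd : d ≠ c) :
    runs (d :: u) = (d, 1) :: (c, k) :: r := by
  rw [runs_cons, hr]; simp [hd]


lemma exps_cons_same {u : List ℕ} {c k r} (hr : runs u = (c, k) :: r) :
    exps (c :: u) = (k + 1) :: r.map Prod.snd := by
  unfold exps; rw [runs_cons_same hr]; rfl

lemma exps_cons_diff {u : List ℕ} {c k r d} (hr : runs u = (c, k) :: r) (hd : d ≠ c) :
    exps (d :: u) = 1 :: k :: r.map Prod.snd := by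
  unfold exps; rw [runs_cons_diff hr hd]; rfl

lemma exps_of_runs {u : List ℕ} {c k r} (hr : runs u = (c, k) :: r) :
    exps u = k :: r.map Prod.snd := by
  unfold exps; rw [hr]; rfl

lemma exps_sum {u : List ℕ} : (exps u).sum = u.length := by
  induction u with
  | nil => rfl
  | cons c t ih =>
    obtain ⟨k, r, hr⟩ := runs_cons_exists c t
    rw [exps_of_runs hr]
    rw [runs_cons] at hr
    revert hr
    cases h' : runs t with
    | nil =>
      have : t = [] := runs_eq_nil_iff.mp h'
      subst this; intro hr; simp at hr; obtain ⟨h1, h2⟩ := hr; subst h2; simp; omega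
    | cons p r' =>
      obtain ⟨d, k'⟩ := p; dsimp
      have hexps : exps t = k' :: r'.map Prod.snd := exps_of_runs h'
      rw [hexps] at ih
      by_cases hcd : c = d <;> simp [hcd]
      · intro h1 h2; subst h1 h2
        simp at ih ⊢; omega
      · intro h1 h2; subst h1 h2
        simp at ih ⊢; omega

lemma exps_pos {u : List ℕ} : ∀ p ∈ exps u, 1 ≤ p := by
  induction u with
  | nil => simp [exps, runs]
  | cons c t ih =>
    obtain ⟨k, r, hr⟩ := runs_cons_exists c t
    rw [exps_of_runs hr]
    rw [runs_cons] at hr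
    revert hr
    cases h' : runs t with
    | nil =>
      intro hr; simp at hr; obtain ⟨h1, h2⟩ := hr; subst h2; simp; omega
    | cons p r' =>
      obtain ⟨d, k'⟩ := p; dsimp
      have hexps : exps t = k' :: r'.map Prod.snd := exps_of_runs h'
      rw [hexps] at ih
      by_cases hcd : c = d <;> simp [hcd]
      · intro h1 h2; subst h1; subst h2
        constructor
        · omega
        · intro p q hpq
          exact ih p (List.mem_cons_of_mem _ (List.mem_map_of_mem (f := Prod.snd) hpq))
      · intro h1 h2; subst h1; subst h2
        refine ⟨by omega, ?_⟩
        intro p q hpq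
        rcases List.mem_cons.mp hpq with h | h
        · have hk := ih k' (List.mem_cons_self)
          have : p = k' := by
            have := congrArg Prod.snd h; simpa using this
          omega
        · exact ih p (List.mem_cons_of_mem _ (List.mem_map_of_mem (f := Prod.snd) h))

lemma Df_eq_match (a b : ℕ) (u : List ℕ) : Df a b u =
    match exps u with
    | [] => []
    | [p] => cut a b p
    | p :: q :: rest =>
        cut a b p ++ (q :: rest).dropLast ++ cut a b ((q :: rest).getLast (List.cons_ne_nil _ _)) := rfl

lemma Df_of_exps_nil {a b : ℕ} {u : List ℕ} (h : exps u = []) : Df a b u = [] := by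
  rw [Df_eq_match, h]

lemma Df_of_exps_single {a b : ℕ} {u : List ℕ} {p : ℕ} (h : exps u = [p]) :
    Df a b u = cut a b p := by
  rw [Df_eq_match, h]

lemma Df_pair {a b : ℕ} {u : List ℕ} {p : ℕ} {l : List ℕ} (h : exps u = p :: l)
    (hl : l ≠ []) :
    Df a b u = cut a b p ++ l.dropLast ++ cut a b (l.getLast hl) := by
  obtain ⟨q, rest, rfl⟩ := List.exists_cons_of_ne_nil hl
  rw [Df_eq_match, h]


def push (c : ℕ) : List (ℕ × ℕ) → List (ℕ × ℕ)
  | [] => [(c, 1)]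
  | [(d, k)] => if d = c then [(d, k + 1)] else [(d, k), (c, 1)]
  | p :: q :: rest => p :: push c (q :: rest)

lemma push_concat (c : ℕ) (xs : List (ℕ × ℕ)) (p : ℕ × ℕ) :
    push c (xs ++ [p]) = xs ++ push c [p] := by
  induction xs with
  | nil => rfl
  | cons q xs ih =>
    cases xs with
    | nil => obtain ⟨d, k⟩ := p; obtain ⟨e, m⟩ := q; simp [push]
    | cons z zs =>
      have : (q :: z :: zs) ++ [p] = q :: ((z :: zs) ++ [p]) := rfl
      rw [this]
      have h2 : (z :: zs) ++ [p] = z :: (zs ++ [p]) := rfl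
      show q :: push c ((z :: zs) ++ [p]) = _
      rw [ih]
      rfl

lemma runs_concat (u : List ℕ) (c : ℕ) : runs (u ++ [c]) = push c (runs u) := by
  induction u with
  | nil => rfl
  | cons d t ih =>
    have : (d :: t) ++ [c] = d :: (t ++ [c]) := rfl
    rw [this, runs_cons, ih, runs_cons]
    cases h' : runs t with
    | nil =>
      by_cases hdc : d = c <;> simp [hdc, push]
    | cons p r =>
      obtain ⟨e, k⟩ := p
      cases r with
      | nil =>
        dsimp [push]
        by_cases hec : e = c <;> by_cases hde : d = e <;>
          simp [hec, hde, push] <;> simp_all [push]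
      | cons q r' =>
        obtain ⟨f, m⟩ := q
        dsimp [push]
        by_cases hde : d = e <;> simp [hde, push]

lemma runs_reverse (u : List ℕ) : runs u.reverse = (runs u).reverse := by
  induction u with
  | nil => rfl
  | cons c t ih =>
    have : (c :: t).reverse = t.reverse ++ [c] := by simp
    rw [this, runs_concat, ih, runs_cons]
    cases h' : runs t with
    | nil => rfl
    | cons p r =>
      obtain ⟨d, k⟩ := p
      dsimp
      rw [List.reverse_cons, push_concat]
      by_cases hcd : c = d
      · subst hcd; simp [push]
      · have hdc : ¬ d = c := fun h => hcd h.symm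
        simp [push, hcd, hdc]

lemma exps_reverse (u : List ℕ) : exps u.reverse = (exps u).reverse := by
  unfold exps; rw [runs_reverse, List.map_reverse]


lemma cut_reverse (a b p : ℕ) : (cut a b p).reverse = cut a b p := by
  unfold cut; split <;> rfl

lemma cut_length_le (a b p : ℕ) : (cut a b p).length ≤ 1 := by
  unfold cut; split <;> simp

lemma Df_reverse (a b : ℕ) (u : List ℕ) : Df a b u.reverse = (Df a b u).reverse := by
  cases h : exps u with
  | nil =>
    rw [Df_of_exps_nil h, Df_of_exps_nil (by rw [exps_reverse, h]; rfl)]; rfl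
  | cons p l =>
    cases l with
    | nil =>
      rw [Df_of_exps_single h, Df_of_exps_single (by rw [exps_reverse, h]; rfl), cut_reverse]
    | cons q rest =>
      rcases List.eq_nil_or_concat (q :: rest) with h1 | ⟨l', L, hl⟩
      · exact absurd h1 (List.cons_ne_nil _ _)
      · have hql : q :: rest ≠ [] := List.cons_ne_nil _ _
        have hl' : q :: rest = l' ++ [L] := by simpa using hl
        have hL : (q :: rest).getLast hql = L := by
          revert hql; rw [hl']; intro hql; exact List.getLast_concat
        have hDf : Df a b u = cut a b p ++ (q :: rest).dropLast ++
            cut a b ((q :: rest).getLast hql) := Df_pair h hql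
        rw [hL, hl', List.dropLast_concat] at hDf
        -- exps u.reverse
        have hrev : exps u.reverse = L :: (l'.reverse ++ [p]) := by
          rw [exps_reverse, h, hl]
          simp
        have hne : l'.reverse ++ [p] ≠ [] := by simp
        have hDfr : Df a b u.reverse = cut a b L ++ (l'.reverse ++ [p]).dropLast ++
            cut a b ((l'.reverse ++ [p]).getLast hne) := Df_pair hrev hne
        rw [List.dropLast_concat, List.getLast_concat] at hDfr
        rw [hDf, hDfr]
        simp [cut_reverse]

lemma inner_reverse (e : List ℕ) :
    ((e.reverse.drop 1).dropLast) = ((e.drop 1).dropLast).reverse := by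
  cases e with
  | nil => rfl
  | cons p l =>
    rcases List.eq_nil_or_concat l with rfl | ⟨l', L, rfl⟩
    · rfl
    · simp [List.dropLast_concat]

lemma Cf1_reverse {a b : ℕ} {u : List ℕ} (h : Cf1 a b u) : Cf1 a b u.reverse := by
  obtain ⟨h1, h2, h3⟩ := h
  refine ⟨?_, ?_, ?_⟩
  · intro c hc; exact h1 c (List.mem_reverse.mp hc)
  · intro p hp; rw [exps_reverse] at hp; exact h2 p (List.mem_reverse.mp hp)
  · intro p hp; rw [exps_reverse, inner_reverse] at hp
    exact h3 p (List.mem_reverse.mp hp)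

lemma iterate_Df_reverse (a b : ℕ) (u : List ℕ) (n : ℕ) :
    (Df a b)^[n] u.reverse = ((Df a b)^[n] u).reverse := by
  induction n generalizing u with
  | zero => rfl
  | succ n ih =>
    rw [Function.iterate_succ_apply, Function.iterate_succ_apply, Df_reverse, ih]

lemma FSmooth_reverse {a b : ℕ} {u : List ℕ} (h : FSmooth a b u) :
    FSmooth a b u.reverse := by
  intro n
  rw [iterate_Df_reverse]
  exact Cf1_reverse (h n)


lemma Df_nil (a b : ℕ) : Df a b [] = [] := rfl

lemma Cf1_nil (a b : ℕ) : Cf1 a b [] := by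
  refine ⟨by simp, by simp [exps, runs], by simp [exps, runs]⟩

lemma FSmooth_nil (a b : ℕ) : FSmooth a b [] := by
  intro n
  have : (Df a b)^[n] [] = [] := Function.iterate_fixed (Df_nil a b) n
  rw [this]; exact Cf1_nil a b

lemma FSmooth_step {a b : ℕ} {u : List ℕ} (h1 : Cf1 a b u)
    (h2 : FSmooth a b (Df a b u)) : FSmooth a b u := by
  intro n
  cases n with
  | zero => exact h1
  | succ n => rw [Function.iterate_succ_apply]; exact h2 n

lemma FSmooth_Df {a b : ℕ} {u : List ℕ} (h : FSmooth a b u) : FSmooth a b (Df a b u) := by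
  intro n
  have := h (n + 1)
  rwa [Function.iterate_succ_apply] at this

lemma length_le_sum (l : List ℕ) (h : ∀ x ∈ l, 1 ≤ x) : l.length ≤ l.sum := by
  induction l with
  | nil => simp
  | cons x t ih =>
    have := h x (List.mem_cons_self)
    have := ih (fun y hy => h y (List.mem_cons_of_mem _ hy))
    simp; omega

lemma Df_length_lt {a b : ℕ} (ha : 1 ≤ a) {u : List ℕ} (hu : u ≠ []) :
    (Df a b u).length < u.length := by
  obtain ⟨c, t, rfl⟩ := List.exists_cons_of_ne_nil hu
  obtain ⟨k, r, hr⟩ := runs_cons_exists c t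
  have hexps : exps (c :: t) = k :: r.map Prod.snd := exps_of_runs hr
  have hsum : (exps (c :: t)).sum = (c :: t).length := exps_sum
  have hpos : ∀ p ∈ exps (c :: t), 1 ≤ p := exps_pos
  have hk1 : 1 ≤ k := hpos k (by rw [hexps]; exact List.mem_cons_self)
  cases hl : r.map Prod.snd with
  | nil =>
    rw [hl] at hexps
    rw [Df_of_exps_single hexps]
    rw [hexps] at hsum; simp at hsum
    by_cases hka : k ≤ a
    · have hc0 : (cut a b k).length = 0 := by unfold cut; rw [if_pos hka]; rfl
      simp [hc0]
    · have hc1 : (cut a b k).length = 1 := by unfold cut; rw [if_neg hka]; rfl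
      rw [hc1]; simp only [List.length_cons]; omega
  | cons q rest =>
    rw [hl] at hexps
    have hne : q :: rest ≠ [] := List.cons_ne_nil _ _
    rw [Df_pair hexps hne]
    rw [hexps] at hsum
    have hQ : (c :: t).length = k + (q :: rest).sum := by rw [← hsum]; simp
    have hlen : (q :: rest).length ≤ (q :: rest).sum := by
      apply length_le_sum
      intro x hx
      exact hpos x (by rw [hexps]; exact List.mem_cons_of_mem _ hx)
    have h2 := cut_length_le a b ((q :: rest).getLast hne)
    have h3 : ((q :: rest).dropLast).length + 1 = (q :: rest).length := by simp
    rw [List.length_append, List.length_append]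
    by_cases hka : k ≤ a
    · have hc0 : (cut a b k).length = 0 := by unfold cut; rw [if_pos hka]; rfl
      omega
    · have hc1 : (cut a b k).length = 1 := by unfold cut; rw [if_neg hka]; rfl
      have hk2 : 2 ≤ k := by omega
      omega


lemma FSmooth_single {a b x : ℕ} (ha : 1 ≤ a) (hab : a < b) (hx : x = a ∨ x = b) :
    FSmooth a b [x] := by
  apply FSmooth_step
  · refine ⟨?_, ?_, ?_⟩
    · intro c hc; simp at hc; subst hc; exact hx
    · intro p hp
      have he : exps [x] = [1] := rfl
      rw [he] at hp; simp at hp; omega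
    · intro p hp
      have he : exps [x] = [1] := rfl
      rw [he] at hp; simp at hp
  · have h1 : Df a b [x] = [] := by
      rw [Df_of_exps_single (rfl : exps [x] = [1])]
      unfold cut; rw [if_pos ha]
    rw [h1]; exact FSmooth_nil a b

lemma dropLast_cons_subset {k : ℕ} {l : List ℕ} {p : ℕ} (hp : p ∈ (k :: l).dropLast) :
    p = k ∨ p ∈ l.dropLast := by
  cases l with
  | nil => simp at hp
  | cons q rest =>
    have : (k :: q :: rest).dropLast = k :: (q :: rest).dropLast := rfl
    rw [this] at hp
    rcases List.mem_cons.mp hp with h | h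
    · exact Or.inl h
    · exact Or.inr h

lemma exists_left_ext (a b : ℕ) (ha : 1 ≤ a) (hab : a < b) :
    ∀ n (u : List ℕ), u.length ≤ n → FSmooth a b u →
      ∃ c, (c = a ∨ c = b) ∧ FSmooth a b (c :: u) := by
  intro n
  induction n with
  | zero =>
    intro u hlen hu
    have hnil : u = [] := by
      cases u with
      | nil => rfl
      | cons c t => simp at hlen
    subst hnil
    exact ⟨a, Or.inl rfl, FSmooth_single ha hab (Or.inl rfl)⟩
  | succ n ih =>
    intro u hlen hu
    cases u with
    | nil => exact ⟨a, Or.inl rfl, FSmooth_single ha hab (Or.inl rfl)⟩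
    | cons c t =>
      obtain ⟨k, r, hr⟩ := runs_cons_exists c t
      have hexps : exps (c :: t) = k :: r.map Prod.snd := exps_of_runs hr
      have hC : Cf1 a b (c :: t) := by simpa using hu 0
      have hc_ab : c = a ∨ c = b := hC.1 c (List.mem_cons_self)
      have hkb : k ≤ b := hC.2.1 k (by rw [hexps]; exact List.mem_cons_self)
      have hinner : ∀ p ∈ (r.map Prod.snd).dropLast, p = a ∨ p = b := by
        intro p hp
        apply hC.2.2
        rw [hexps]
        simpa using hp
      obtain ⟨d, hd_ab, hdc⟩ : ∃ d, (d = a ∨ d = b) ∧ d ≠ c := by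
        rcases hc_ab with rfl | rfl
        · exact ⟨b, Or.inr rfl, by omega⟩
        · exact ⟨a, Or.inl rfl, by omega⟩
      have hletters : ∀ x, (x = a ∨ x = b) → ∀ e ∈ x :: c :: t, e = a ∨ e = b := by
        intro x hx e he
        rcases List.mem_cons.mp he with rfl | he
        · exact hx
        · exact hC.1 e he
      have hexpsd : exps (d :: c :: t) = 1 :: k :: r.map Prod.snd :=
        exps_cons_diff hr hdc
      have hexpsc : exps (c :: c :: t) = (k + 1) :: r.map Prod.snd :=
        exps_cons_same hr
      cases hcase : r.map Prod.snd with
      | nil =>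
        -- single run: prepend the other letter
        rw [hcase] at hexps hexpsd
        have hDf : Df a b (d :: c :: t) = Df a b (c :: t) := by
          rw [Df_pair hexpsd (by simp), Df_of_exps_single hexps]
          have h1 : cut a b 1 = [] := by unfold cut; rw [if_pos ha]
          simp [h1]
        refine ⟨d, hd_ab, FSmooth_step ⟨hletters d hd_ab, ?_, ?_⟩ ?_⟩
        · intro p hp
          rw [hexpsd] at hp
          simp at hp
          rcases hp with rfl | rfl <;> omega
        · intro p hp
          rw [hexpsd] at hp
          simp at hp
        · rw [hDf]; exact FSmooth_Df hu
      | cons q rest =>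
        rw [hcase] at hexps hexpsd hexpsc hinner
        have hne : (q :: rest) ≠ [] := List.cons_ne_nil _ _
        have htail_le : ∀ p ∈ q :: rest, p ≤ b := by
          intro p hp
          exact hC.2.1 p (by rw [hexps]; exact List.mem_cons_of_mem _ hp)
        by_cases hka : k = a
        · -- k = a : use the induction hypothesis on the derivative
          set v := Df a b (c :: t) with hv
          have hvsm : FSmooth a b v := FSmooth_Df hu
          have hvlen : v.length ≤ n := by
            have h := Df_length_lt (b := b) ha (List.cons_ne_nil c t)
            rw [← hv] at h
            simp only [List.length_cons] at hlen h
            omega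
          obtain ⟨c', hc'_ab, hc'⟩ := ih v hvlen hvsm
          have hDfu : v = (q :: rest).dropLast ++ cut a b ((q :: rest).getLast hne) := by
            rw [hv, Df_pair hexps hne]
            have h1 : cut a b k = [] := by unfold cut; rw [if_pos (by omega)]
            simp [h1]
          rcases hc'_ab with hc'a | hc'b
          · -- c' = a : prepend the different letter d
            have hDf : Df a b (d :: c :: t) = c' :: v := by
              rw [Df_pair hexpsd (List.cons_ne_nil _ _)]
              have h1 : cut a b 1 = [] := by unfold cut; rw [if_pos ha]
              have e1 : (k :: q :: rest).dropLast = k :: (q :: rest).dropLast := rfl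
              have e2 : (k :: q :: rest).getLast (List.cons_ne_nil _ _) =
                  (q :: rest).getLast hne := List.getLast_cons hne
              rw [h1, e1, e2, hDfu, hc'a, hka]
              simp
            refine ⟨d, hd_ab, FSmooth_step ⟨hletters d hd_ab, ?_, ?_⟩ ?_⟩
            · intro p hp
              rw [hexpsd] at hp
              rcases List.mem_cons.mp hp with rfl | hp
              · omega
              · rcases List.mem_cons.mp hp with rfl | hp
                · omega
                · exact htail_le p hp
            · intro p hp
              rw [hexpsd] at hp
              have : p ∈ (k :: q :: rest).dropLast := by simpa using hp
              rcases dropLast_cons_subset this with rfl | hp'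
              · exact Or.inl hka
              · exact hinner p hp'
            · rw [hDf]; exact hc'
          · -- c' = b : prepend the same letter c
            have hDf : Df a b (c :: c :: t) = c' :: v := by
              rw [Df_pair hexpsc hne]
              have h1 : cut a b (k + 1) = [c'] := by
                unfold cut; rw [if_neg (by omega), hc'b]
              rw [h1, hDfu]
              simp
            refine ⟨c, hc_ab, FSmooth_step ⟨hletters c hc_ab, ?_, ?_⟩ ?_⟩
            · intro p hp
              rw [hexpsc] at hp
              rcases List.mem_cons.mp hp with rfl | hp
              · omega
              · exact htail_le p hp
            · intro p hp
              rw [hexpsc] at hp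
              have : p ∈ (q :: rest).dropLast := by simpa using hp
              exact hinner p this
            · rw [hDf]; exact hc'
        · by_cases hkb' : k = b
          · -- k = b : prepend the different letter d
            have hDf : Df a b (d :: c :: t) = Df a b (c :: t) := by
              rw [Df_pair hexpsd (List.cons_ne_nil _ _), Df_pair hexps hne]
              have h1 : cut a b 1 = [] := by unfold cut; rw [if_pos ha]
              have h2 : cut a b k = [k] := by unfold cut; rw [if_neg (by omega), hkb']
              have e1 : (k :: q :: rest).dropLast = k :: (q :: rest).dropLast := rfl
              have e2 : (k :: q :: rest).getLast (List.cons_ne_nil _ _) =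
                  (q :: rest).getLast hne := List.getLast_cons hne
              rw [h1, h2, e1, e2]
              simp
            refine ⟨d, hd_ab, FSmooth_step ⟨hletters d hd_ab, ?_, ?_⟩ ?_⟩
            · intro p hp
              rw [hexpsd] at hp
              rcases List.mem_cons.mp hp with rfl | hp
              · omega
              · rcases List.mem_cons.mp hp with rfl | hp
                · omega
                · exact htail_le p hp
            · intro p hp
              rw [hexpsd] at hp
              have : p ∈ (k :: q :: rest).dropLast := by simpa using hp
              rcases dropLast_cons_subset this with rfl | hp'
              · exact Or.inr hkb'
              · exact hinner p hp'
            · rw [hDf]; exact FSmooth_Df hu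
          · -- k ∉ {a, b} : prepend the same letter c
            have hcut : cut a b (k + 1) = cut a b k := by
              unfold cut
              by_cases h : k ≤ a
              · rw [if_pos (by omega), if_pos h]
              · rw [if_neg (by omega), if_neg h]
            have hDf : Df a b (c :: c :: t) = Df a b (c :: t) := by
              rw [Df_pair hexpsc hne, Df_pair hexps hne, hcut]
            refine ⟨c, hc_ab, FSmooth_step ⟨hletters c hc_ab, ?_, ?_⟩ ?_⟩
            · intro p hp
              rw [hexpsc] at hp
              rcases List.mem_cons.mp hp with rfl | hp
              · omega
              · exact htail_le p hp
            · intro p hp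
              rw [hexpsc] at hp
              have : p ∈ (q :: rest).dropLast := by simpa using hp
              exact hinner p this
            · rw [hDf]; exact FSmooth_Df hu


theorem stmt2 (a b : ℕ) (ha : 1 ≤ a) (hab : a < b) (u : List ℕ)
    (hu : FSmooth a b u) :
    (∃ c, (c = a ∨ c = b) ∧ FSmooth a b (c :: u)) ∧
    (∃ d, (d = a ∨ d = b) ∧ FSmooth a b (u ++ [d])) := by
  constructor
  · exact exists_left_ext a b ha hab u.length u le_rfl hu
  · have hur : FSmooth a b u.reverse := FSmooth_reverse hu
    obtain ⟨d, hd, hsm⟩ := exists_left_ext a b ha hab u.reverse.length u.reverse le_rfl hur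
    refine ⟨d, hd, ?_⟩
    have h : u ++ [d] = (d :: u.reverse).reverse := by simp
    rw [h]
    exact FSmooth_reverse hsm

end SmoothWords
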